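/- If the endomorphism monoid End_S(A) of an S-act A is strongly π-regular (for every f there exist g and n with f^n = g f^{n+1} = f^{n+1} g), then A is both strongly Hopfian and strongly co-Hopfian. -/
import Mathlib


structure RAct (S : Type*) [Monoid S] (A : Type*) where
  act : A → S → A
  act_one : ∀ a, act a 1 = a
  act_mul : ∀ a s t, act a (s * t) = act (act a s) t

variable {S : Type*} [Monoid S] {A B : Type*}

/-- `f` is an S-act homomorphism from `M` to `N`. -/
def IsHom (M : RAct S A) (N : RAct S B) (f : A → B) : Prop :=
  ∀ a s, f (M.act a s) = N.act (f a) s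

/-- `f` is an S-act endomorphism of `M`. -/
def IsEnd (M : RAct S A) (f : A → A) : Prop := IsHom M M f

/-- `r` is a congruence on the S-act `M`. -/
def IsCong (M : RAct S A) (r : A → A → Prop) : Prop :=
  Equivalence r ∧ ∀ a b s, r a b → r (M.act a s) (M.act b s)

/-- The kernel congruence `K_f`. -/
def kerC {A : Type*} (f : A → A) : A → A → Prop := fun a b => f a = f b

/-- The image congruence `I_f = (im f × im f) ∪ Δ`. -/
def imC {A : Type*} (f : A → A) : A → A → Prop :=
  fun a b => a = b ∨ (a ∈ Set.range f ∧ b ∈ Set.range f)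

/-- The diagonal relation. -/
def diagR (A : Type*) : A → A → Prop := fun a b => a = b

/-- The full relation. -/
def fullR (A : Type*) : A → A → Prop := fun _ _ => True

/-- `M` is strongly Hopfian: the chain `K_f ⊆ K_{f²} ⊆ ⋯` stabilizes for every endomorphism. -/
def StronglyHopfian (M : RAct S A) : Prop :=
  ∀ f : A → A, IsEnd M f → ∃ n : ℕ, 1 ≤ n ∧ ∀ m, n ≤ m → kerC (f^[m]) = kerC (f^[n])

/-- `M` is strongly co-Hopfian: the chain `I_f ⊇ I_{f²} ⊇ ⋯` stabilizes for every endomorphism. -/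
def StronglyCoHopfian (M : RAct S A) : Prop :=
  ∀ f : A → A, IsEnd M f → ∃ n : ℕ, 1 ≤ n ∧ ∀ m, n ≤ m → imC (f^[m]) = imC (f^[n])

/-- `M` is Hopfian: every surjective endomorphism is injective. -/
def Hopfian (M : RAct S A) : Prop :=
  ∀ f : A → A, IsEnd M f → Function.Surjective f → Function.Injective f

/-- `M` is co-Hopfian: every injective endomorphism is surjective. -/
def CoHopfian (M : RAct S A) : Prop :=
  ∀ f : A → A, IsEnd M f → Function.Injective f → Function.Surjective f

/-- ACC on congruences. -/
def NoetherianAct (M : RAct S A) : Prop :=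
  ∀ c : ℕ → (A → A → Prop), (∀ n, IsCong M (c n)) →
    (∀ n a b, c n a b → c (n + 1) a b) → ∃ N, ∀ m, N ≤ m → c m = c N

/-- DCC on congruences. -/
def ArtinianAct (M : RAct S A) : Prop :=
  ∀ c : ℕ → (A → A → Prop), (∀ n, IsCong M (c n)) →
    (∀ n a b, c (n + 1) a b → c n a b) → ∃ N, ∀ m, N ≤ m → c m = c N

/-- The monoid `S` as a right act over itself. -/
def mulAct (S : Type*) [Monoid S] : RAct S S :=
  ⟨fun x s => x * s, mul_one, fun a s t => (mul_assoc a s t).symm⟩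
/-- If `End_S(A)` is strongly π-regular then `A` is strongly Hopfian and strongly co-Hopfian. -/
theorem stmt18 (M : RAct S A)
    (hreg : ∀ f : A → A, IsEnd M f → ∃ g : A → A, IsEnd M g ∧
      ∃ n : ℕ, 1 ≤ n ∧ f^[n] = g ∘ f^[n + 1] ∧ f^[n] = f^[n + 1] ∘ g) :
    StronglyHopfian M ∧ StronglyCoHopfian M := by
  constructor
  · intro f hf
    obtain ⟨g, hg, n, hn1, h1, h2⟩ := hreg f hf
    refine ⟨n, hn1, fun m hm => ?_⟩
    -- first: kerC (f^[n+k]) ⊆ kerC (f^[n])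
    have key : ∀ k a b, f^[n + k] a = f^[n + k] b → f^[n] a = f^[n] b := by
      intro k
      induction k with
      | zero => intro a b h; exact h
      | succ k ih =>
        intro a b h
        apply ih
        have e : f^[n + k] = g ∘ f^[n + k + 1] := by
          have : f^[n + k] = f^[n] ∘ f^[k] := (Function.iterate_add f n k)
          rw [this, h1]
          funext x
          simp [Function.comp, ← Function.iterate_add_apply,
            show n + 1 + k = n + k + 1 by omega]
        rw [e]
        exact congrArg g h
    funext a b
    apply propext
    obtain ⟨k, rfl⟩ := Nat.exists_eq_add_of_le hm
    constructor
    · exact key k a b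
    · intro h
      show f^[n + k] a = f^[n + k] b
      rw [add_comm, Function.iterate_add_apply, Function.iterate_add_apply, h]
  · intro f hf
    obtain ⟨g, hg, n, hn1, h1, h2⟩ := hreg f hf
    refine ⟨n, hn1, fun m hm => ?_⟩
    have key : ∀ k, Set.range (f^[n]) ⊆ Set.range (f^[n + k]) := by
      intro k
      induction k with
      | zero => exact fun x hx => hx
      | succ k ih =>
        intro x hx
        obtain ⟨y, rfl⟩ := ih hx
        refine ⟨g y, ?_⟩
        have e : f^[n + k] = f^[n + k + 1] ∘ g := by
          have : f^[n + k] = f^[k] ∘ f^[n] := by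
            rw [add_comm]; exact (Function.iterate_add f k n)
          rw [this, h2]
          funext z
          simp [Function.comp, ← Function.iterate_add_apply,
            show k + (n + 1) = n + k + 1 by omega, add_comm]
        conv_rhs => rw [e]
        rfl
    obtain ⟨k, rfl⟩ := Nat.exists_eq_add_of_le hm
    have hr : Set.range (f^[n + k]) = Set.range (f^[n]) := by
      apply Set.Subset.antisymm
      · rintro x ⟨y, rfl⟩
        exact ⟨f^[k] y, (Function.iterate_add_apply f n k y).symm⟩
      · exact key k
    funext a b
    apply propext
    unfold imC
    rw [hr]
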